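/- For b ≥ 6/5, η₁(1/2+ib) - √(g₂(1/2+ib)/12) < 78π² e^{-2πb}, and moreover 78π² e^{-2πb} < 2π/b for all b ≥ √3; consequently η₁(1/2+ib) - √(g₂(1/2+ib)/12) < 2π/b for b ≥ √3. -/

import Mathlib

set_option maxHeartbeats 1000000


noncomputable section
open Real

/-- The value `η₁(1/2 + ib)`, given by the `q`-series at `q = -e^{-2πb}`. -/
def eta1Line (b : ℝ) : ℝ :=
  π ^ 2 / 3 - 8 * π ^ 2 *
    ∑' k : ℕ, ((∑ d ∈ (k + 1).divisors, d : ℕ) : ℝ) * (-Real.exp (-2 * π * b)) ^ (k + 1)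

/-- The value `g₂(1/2 + ib)`, given by the `q`-series at `q = -e^{-2πb}`. -/
def g2Line (b : ℝ) : ℝ :=
  4 / 3 * π ^ 4 + 320 * π ^ 4 *
    ∑' k : ℕ, ((∑ d ∈ (k + 1).divisors, d ^ 3 : ℕ) : ℝ) * (-Real.exp (-2 * π * b)) ^ (k + 1)

private lemma divisors_card_le (n : ℕ) : n.divisors.card ≤ n := by
  have h : n.divisors ⊆ Finset.Icc 1 n := by
    intro d hd
    rw [Nat.mem_divisors] at hd
    refine Finset.mem_Icc.mpr ⟨?_, Nat.le_of_dvd (Nat.pos_of_ne_zero hd.2) hd.1⟩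
    rcases Nat.eq_zero_or_pos d with h | h
    · exact absurd (h ▸ hd.1) (by simp [Nat.zero_dvd]; exact fun hn => hd.2 hn)
    · exact h
  calc n.divisors.card ≤ (Finset.Icc 1 n).card := Finset.card_le_card h
    _ = n := by simp

private lemma sigma_le (n j : ℕ) : (∑ d ∈ n.divisors, d ^ j) ≤ n ^ (j + 1) := by
  calc ∑ d ∈ n.divisors, d ^ j ≤ ∑ _d ∈ n.divisors, n ^ j := by
        refine Finset.sum_le_sum fun d hd => ?_
        exact Nat.pow_le_pow_left (Nat.le_of_dvd (Nat.pos_of_ne_zero (Nat.mem_divisors.mp hd).2)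
          (Nat.mem_divisors.mp hd).1) j
    _ = n.divisors.card * n ^ j := by rw [Finset.sum_const, smul_eq_mul]
    _ ≤ n * n ^ j := Nat.mul_le_mul_right _ (divisors_card_le n)
    _ = n ^ (j + 1) := by ring

private lemma key (f : ℕ → ℕ) (hf1 : f 1 = 1) (C x : ℝ)
    (hf : ∀ k : ℕ, (f (k + 2) : ℝ) ≤ C ^ (k + 1)) (hC : 1 ≤ C)
    (hx : 0 < x) (hCx : C * x < 1) :
    Summable (fun k : ℕ => (f (k + 1) : ℝ) * (-x) ^ (k + 1)) ∧
    |(∑' k : ℕ, (f (k + 1) : ℝ) * (-x) ^ (k + 1)) + x| ≤ C * x ^ 2 / (1 - C * x) := by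
  set g : ℕ → ℝ := fun k => (f (k + 1) : ℝ) * (-x) ^ (k + 1) with hg
  have hCx0 : 0 ≤ C * x := by positivity
  have habsle : ∀ k : ℕ, |g (k + 1)| ≤ C * x ^ 2 * (C * x) ^ k := by
    intro k
    have h1 : |g (k + 1)| = (f (k + 2) : ℝ) * x ^ (k + 2) := by
      rw [hg]
      rw [abs_mul, abs_pow, abs_neg, abs_of_pos hx, Nat.abs_cast]
    rw [h1]
    calc (f (k + 2) : ℝ) * x ^ (k + 2) ≤ C ^ (k + 1) * x ^ (k + 2) := by
          exact mul_le_mul_of_nonneg_right (hf k) (by positivity)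
      _ = C * x ^ 2 * (C * x) ^ k := by ring
  have hgeo : Summable (fun k : ℕ => C * x ^ 2 * (C * x) ^ k) :=
    (summable_geometric_of_lt_one hCx0 hCx).mul_left _
  have habs : Summable (fun k : ℕ => |g (k + 1)|) :=
    Summable.of_nonneg_of_le (fun k => abs_nonneg _) habsle hgeo
  have hs1 : Summable (fun k : ℕ => g (k + 1)) := habs.of_abs
  have hs : Summable g := (summable_nat_add_iff 1).mp hs1
  refine ⟨hs, ?_⟩
  have h0 : g 0 = -x := by simp [hg, hf1]
  have hsplit : ∑' k, g k = -x + ∑' k, g (k + 1) := by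
    rw [Summable.tsum_eq_zero_add hs, h0]
  rw [hsplit]
  have : -x + (∑' k, g (k + 1)) + x = ∑' k, g (k + 1) := by ring
  rw [this]
  have hnorm : |∑' k, g (k + 1)| ≤ ∑' k, |g (k + 1)| := by
    simpa [Real.norm_eq_abs] using norm_tsum_le_tsum_norm (f := fun k => g (k + 1))
      (by simpa [Real.norm_eq_abs] using habs)
  calc |∑' k, g (k + 1)| ≤ ∑' k, |g (k + 1)| := hnorm
    _ ≤ ∑' k : ℕ, C * x ^ 2 * (C * x) ^ k := Summable.tsum_le_tsum habsle habs hgeo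
    _ = C * x ^ 2 * (1 - C * x)⁻¹ := by
        rw [tsum_mul_left, tsum_geometric_of_lt_one hCx0 hCx]
    _ = C * x ^ 2 / (1 - C * x) := by rw [div_eq_mul_inv]

private lemma nat_pow_bound (k : ℕ) : (k + 2) ^ 2 ≤ 4 ^ (k + 1) ∧ (k + 2) ^ 4 ≤ 16 ^ (k + 1) := by
  have h : k + 2 ≤ 2 ^ (k + 1) := Nat.lt_two_pow_self (n := k + 1)
  constructor
  · calc (k + 2) ^ 2 ≤ (2 ^ (k + 1)) ^ 2 := Nat.pow_le_pow_left h 2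
      _ = 4 ^ (k + 1) := by rw [← pow_mul, mul_comm, pow_mul]; norm_num
  · calc (k + 2) ^ 4 ≤ (2 ^ (k + 1)) ^ 4 := Nat.pow_le_pow_left h 4
      _ = 16 ^ (k + 1) := by rw [← pow_mul, mul_comm, pow_mul]; norm_num

private lemma hf1bound (k : ℕ) : ((∑ d ∈ (k + 2).divisors, d : ℕ) : ℝ) ≤ (4 : ℝ) ^ (k + 1) := by
  have h1 : (∑ d ∈ (k + 2).divisors, d) ≤ (k + 2) ^ 2 := by
    simpa using sigma_le (k + 2) 1
  have := h1.trans (nat_pow_bound k).1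
  calc ((∑ d ∈ (k + 2).divisors, d : ℕ) : ℝ) ≤ ((4 ^ (k + 1) : ℕ) : ℝ) := by exact_mod_cast this
    _ = (4 : ℝ) ^ (k + 1) := by push_cast; ring

private lemma hf3bound (k : ℕ) : ((∑ d ∈ (k + 2).divisors, d ^ 3 : ℕ) : ℝ) ≤ (16 : ℝ) ^ (k + 1) := by
  have h1 : (∑ d ∈ (k + 2).divisors, d ^ 3) ≤ (k + 2) ^ 4 := sigma_le (k + 2) 3
  have := h1.trans (nat_pow_bound k).2
  calc ((∑ d ∈ (k + 2).divisors, d ^ 3 : ℕ) : ℝ) ≤ ((16 ^ (k + 1) : ℕ) : ℝ) := by exact_mod_cast this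
    _ = (16 : ℝ) ^ (k + 1) := by push_cast; ring

private lemma main_est (b : ℝ) (hb : 6 / 5 ≤ b) :
    eta1Line b - Real.sqrt (g2Line b / 12) < 78 * π ^ 2 * Real.exp (-2 * π * b) := by
  set x : ℝ := Real.exp (-2 * π * b) with hxdef
  have hx : 0 < x := Real.exp_pos _
  have hpi : 3.14 ≤ π := by linarith [Real.pi_gt_d6]
  have hx1 : x ≤ 1 / 1000 := by
    have h7 : (7 : ℝ) ≤ 2 * π * b := by nlinarith
    have : x ≤ Real.exp (-7) := by
      rw [hxdef]
      apply Real.exp_le_exp.mpr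
      linarith
    have he7 : (1000 : ℝ) ≤ Real.exp 7 := by
      have h1 : (2.7 : ℝ) ^ (7 : ℕ) ≤ (Real.exp 1) ^ (7 : ℕ) := by
        apply pow_le_pow_left₀ (by norm_num)
        linarith [Real.exp_one_gt_d9]
      have h2 : (Real.exp 1) ^ (7 : ℕ) = Real.exp 7 := by
        rw [← Real.exp_nat_mul]; norm_num
      nlinarith
    calc x ≤ Real.exp (-7) := this
      _ = (Real.exp 7)⁻¹ := by rw [← Real.exp_neg]
      _ ≤ 1 / 1000 := by
          rw [one_div]
          exact inv_anti₀ (by norm_num) he7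
  -- the two series
  have k1 := key (fun n => ∑ d ∈ n.divisors, d) (by decide) 4 x hf1bound (by norm_num) hx
      (by nlinarith)
  have k3 := key (fun n => ∑ d ∈ n.divisors, d ^ 3) (by decide) 16 x hf3bound (by norm_num) hx
      (by nlinarith)
  set S1 : ℝ := ∑' k : ℕ, ((∑ d ∈ (k + 1).divisors, d : ℕ) : ℝ) * (-x) ^ (k + 1) with hS1
  set S3 : ℝ := ∑' k : ℕ, ((∑ d ∈ (k + 1).divisors, d ^ 3 : ℕ) : ℝ) * (-x) ^ (k + 1) with hS3
  have hb1 : |S1 + x| ≤ 5 * x ^ 2 := by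
    refine k1.2.trans ?_
    rw [div_le_iff₀ (by nlinarith)]
    nlinarith
  have hb3 : |S3 + x| ≤ 17 * x ^ 2 := by
    refine k3.2.trans ?_
    rw [div_le_iff₀ (by nlinarith)]
    nlinarith
  have hS1lb : -x - 5 * x ^ 2 ≤ S1 := by
    have := abs_le.mp hb1
    linarith [this.1]
  have hS3lb : -x - 17 * x ^ 2 ≤ S3 := by
    have := abs_le.mp hb3
    linarith [this.1]
  have heta : eta1Line b = π ^ 2 / 3 - 8 * π ^ 2 * S1 := rfl
  have hg2 : g2Line b = 4 / 3 * π ^ 4 + 320 * π ^ 4 * S3 := rfl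
  have hpi0 : 0 < π := by linarith
  -- lower bound for sqrt
  have hA : (0 : ℝ) ≤ π ^ 2 / 3 * (1 - 150 * x) := by nlinarith
  have hsq : π ^ 2 / 3 * (1 - 150 * x) ≤ Real.sqrt (g2Line b / 12) := by
    rw [show π ^ 2 / 3 * (1 - 150 * x) = Real.sqrt ((π ^ 2 / 3 * (1 - 150 * x)) ^ 2) from
      (Real.sqrt_sq hA).symm]
    apply Real.sqrt_le_sqrt
    rw [hg2]
    have hp4 : (0:ℝ) < π ^ 4 := by positivity
    have hmul : 320 * π ^ 4 * (-x - 17 * x ^ 2) ≤ 320 * π ^ 4 * S3 :=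
      mul_le_mul_of_nonneg_left hS3lb (by positivity)
    have h60 : 26580 * x ^ 2 ≤ 60 * x := by nlinarith
    nlinarith [hmul, mul_le_mul_of_nonneg_left h60 hp4.le]
  have hetaub : eta1Line b ≤ π ^ 2 / 3 + 8 * π ^ 2 * (x + 5 * x ^ 2) := by
    rw [heta]
    have hmul : 8 * π ^ 2 * (-x - 5 * x ^ 2) ≤ 8 * π ^ 2 * S1 :=
      mul_le_mul_of_nonneg_left hS1lb (by positivity)
    nlinarith [hmul]
  have : eta1Line b - Real.sqrt (g2Line b / 12) ≤
      π ^ 2 / 3 + 8 * π ^ 2 * (x + 5 * x ^ 2) - π ^ 2 / 3 * (1 - 150 * x) := by linarith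
  refine this.trans_lt ?_
  have hp2 : (0:ℝ) < π ^ 2 := by positivity
  have h40 : 40 * x ^ 2 < 20 * x := by nlinarith
  nlinarith [mul_lt_mul_of_pos_left h40 hp2]

private lemma part2 (b : ℝ) (hb : Real.sqrt 3 ≤ b) :
    78 * π ^ 2 * Real.exp (-2 * π * b) < 2 * π / b := by
  have hpi : 3.14 ≤ π := by linarith [Real.pi_gt_d6]
  have hb17 : (1.7 : ℝ) ≤ b := by
    refine le_trans ?_ hb
    rw [show (1.7 : ℝ) = Real.sqrt (1.7 ^ 2) from (Real.sqrt_sq (by norm_num)).symm]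
    exact Real.sqrt_le_sqrt (by norm_num)
  have hb0 : 0 < b := by linarith
  have hy : (0 : ℝ) ≤ 2 * π * b := by positivity
  have hexp : (2 * π * b) ^ 4 / 24 ≤ Real.exp (2 * π * b) := by
    have h := Real.pow_div_factorial_le_exp (x := 2 * π * b) hy 4
    norm_num [Nat.factorial] at h
    exact h
  rw [lt_div_iff₀ hb0]
  have hen : Real.exp (-2 * π * b) = (Real.exp (2 * π * b))⁻¹ := by
    rw [← Real.exp_neg]; ring_nf
  rw [hen]
  have hexp0 : 0 < Real.exp (2 * π * b) := Real.exp_pos _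
  have heq : 78 * π ^ 2 * (Real.exp (2 * π * b))⁻¹ * b
      = 78 * π ^ 2 * b / Real.exp (2 * π * b) := by ring
  rw [heq, div_lt_iff₀ hexp0]
  have h1 : 2 * π * ((2 * π * b) ^ 4 / 24) ≤ 2 * π * Real.exp (2 * π * b) :=
    mul_le_mul_of_nonneg_left hexp (by positivity)
  have hu : (5.3 : ℝ) ≤ π * b := by nlinarith
  have hu3 : (5.3 : ℝ) ^ 3 ≤ (π * b) ^ 3 := pow_le_pow_left₀ (by norm_num) hu 3
  have hpb2 : (0 : ℝ) < π ^ 2 * b := by positivity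
  have hfac : (78 : ℝ) < 4 / 3 * (π * b) ^ 3 := by nlinarith
  nlinarith [mul_lt_mul_of_pos_left hfac hpb2, h1]

/-- For `b ≥ 6/5`, `η₁(1/2+ib) - √(g₂(1/2+ib)/12) < 78π² e^{-2πb}`; moreover
`78π² e^{-2πb} < 2π/b` for all `b ≥ √3`; consequently
`η₁(1/2+ib) - √(g₂(1/2+ib)/12) < 2π/b` for `b ≥ √3`. -/
theorem stmt_17 :
    (∀ b : ℝ, 6 / 5 ≤ b →
      eta1Line b - Real.sqrt (g2Line b / 12) < 78 * π ^ 2 * Real.exp (-2 * π * b)) ∧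
    (∀ b : ℝ, Real.sqrt 3 ≤ b → 78 * π ^ 2 * Real.exp (-2 * π * b) < 2 * π / b) ∧
    (∀ b : ℝ, Real.sqrt 3 ≤ b →
      eta1Line b - Real.sqrt (g2Line b / 12) < 2 * π / b) := by
  have hs3 : (6 / 5 : ℝ) ≤ Real.sqrt 3 := by
    rw [show (6 / 5 : ℝ) = Real.sqrt ((6 / 5) ^ 2) from (Real.sqrt_sq (by norm_num)).symm]
    exact Real.sqrt_le_sqrt (by norm_num)
  exact ⟨fun b hb => main_est b hb, fun b hb => part2 b hb,
    fun b hb => (main_est b (hs3.trans hb)).trans (part2 b hb)⟩
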